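/- In the umbrella construction: with λᵢ as above and I(z) ∈ {1,…,d} the a.s.-unique index minimizing λᵢ(z), there exists c₇ < ∞ such that for all i ∈ {1,…,d}, all t > n₀, and all z ∈ U_{i,t}, one has ℙ[I(z) = i, L(0) > t] ≤ c₇ t^{−2d+1}. -/

import Mathlib

open MeasureTheory ProbabilityTheory
open scoped ENNReal

lemma bzz_tele (m₀ : ℕ) (hm : 1 ≤ m₀) :
    ∑' M : ℕ, (if m₀ ≤ M then ENNReal.ofReal ((((M:ℝ)+1)^2)⁻¹) else 0)
      ≤ ENNReal.ofReal (1 / m₀) := by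
  have key : ∀ N : ℕ,
      (∑ M ∈ Finset.range N, (if m₀ ≤ M then ENNReal.ofReal ((((M:ℝ)+1)^2)⁻¹) else 0))
      ≤ ENNReal.ofReal (1/(m₀:ℝ) - 1/((max N m₀ : ℕ):ℝ)) := by
    intro N
    induction N with
    | zero => simp
    | succ N ih =>
      rw [Finset.sum_range_succ]
      rcases le_or_gt m₀ N with h | h
      · have hmax : max N m₀ = N := max_eq_left h
        have hmax' : max (N+1) m₀ = N + 1 := max_eq_left (le_trans h (Nat.le_succ N))
        rw [hmax'] at *
        rw [hmax] at ih
        have hN0 : (0:ℝ) < N := by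
          have : (1:ℝ) ≤ (m₀:ℝ) := by exact_mod_cast hm
          have : (1:ℝ) ≤ (N:ℝ) := le_trans this (by exact_mod_cast h)
          linarith
        have hnn : (0:ℝ) ≤ 1/(m₀:ℝ) - 1/(N:ℝ) := by
          have h1 : (0:ℝ) < m₀ := by positivity
          have : 1/(N:ℝ) ≤ 1/(m₀:ℝ) := by
            apply one_div_le_one_div_of_le h1; exact_mod_cast h
          linarith
        rw [if_pos h]
        calc _ ≤ ENNReal.ofReal (1/(m₀:ℝ) - 1/(N:ℝ)) + ENNReal.ofReal ((((N:ℝ)+1)^2)⁻¹) :=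
              add_le_add ih le_rfl
          _ = ENNReal.ofReal (1/(m₀:ℝ) - 1/(N:ℝ) + (((N:ℝ)+1)^2)⁻¹) := by
              rw [ENNReal.ofReal_add hnn (by positivity)]
          _ ≤ _ := by
              apply ENNReal.ofReal_le_ofReal
              push_cast
              have heq : 1/(N:ℝ) - 1/((N:ℝ)+1) = ((N:ℝ)*((N:ℝ)+1))⁻¹ := by
                field_simp
                ring
              have : (((N:ℝ)+1)^2)⁻¹ ≤ 1/(N:ℝ) - 1/((N:ℝ)+1) := by
                rw [heq, inv_le_inv₀ (by positivity) (by positivity)]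
                nlinarith
              linarith
      · have hmax' : max (N+1) m₀ = m₀ := max_eq_right h
        have hmax : max N m₀ = m₀ := max_eq_right h.le
        rw [hmax'] at *
        rw [hmax] at ih
        rw [if_neg (by omega)]
        simpa using ih
  rw [ENNReal.tsum_eq_iSup_sum]
  apply iSup_le
  intro F
  calc ∑ M ∈ F, _ ≤ _ := Finset.sum_le_sum_of_subset (Finset.subset_range_sup_succ F)
    _ ≤ _ := key _
    _ ≤ _ := by
      apply ENNReal.ofReal_le_ofReal
      have : (0:ℝ) ≤ 1/((max (F.sup id + 1) m₀ : ℕ):ℝ) := by positivity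
      linarith

lemma bzz_card (K : Type) [Fintype K] [DecidableEq K] (M : ℕ) (hKne : Nonempty K) :
    ∑' _ : ↥((fun v : K → ℕ => Finset.univ.sup v) ⁻¹' {M}), (1:ℝ≥0∞)
      ≤ ((Fintype.card K * (M+1)^(Fintype.card K - 1) : ℕ) : ℝ≥0∞) := by
  classical
  set T := (fun v : K → ℕ => Finset.univ.sup v) ⁻¹' {M} with hT
  set S : K → Set (K → ℕ) := fun k => {v | v k = M ∧ ∀ k', v k' ≤ M} with hS
  have hsub : T ⊆ ⋃ k, S k := by
    intro v hv
    have hvM : Finset.univ.sup v = M := hv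
    obtain ⟨k, -, hk⟩ := Finset.exists_mem_eq_sup Finset.univ Finset.univ_nonempty v
    refine Set.mem_iUnion.2 ⟨k, ?_, fun k' => ?_⟩
    · rw [← hk, hvM]
    · rw [← hvM]; exact Finset.le_sup (Finset.mem_univ k')
  have hslice : ∀ k, ∑' _ : ↥(S k), (1:ℝ≥0∞) ≤ (((M+1)^(Fintype.card K - 1) : ℕ) : ℝ≥0∞) := by
    intro k
    set φ : ↥(S k) → ({k' : K // k' ≠ k} → Fin (M+1)) :=
      fun v => fun k' => ⟨v.1 k'.1, Nat.lt_succ_of_le (v.2.2 k'.1)⟩ with hφ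
    have hinj : Function.Injective φ := by
      rintro ⟨v, hv⟩ ⟨w, hw⟩ h
      apply Subtype.ext
      funext x
      show v x = w x
      by_cases hx : x = k
      · rw [hx, hv.1, hw.1]
      · have := congrFun h ⟨x, hx⟩
        simpa [hφ] using congrArg Fin.val this
    calc ∑' _ : ↥(S k), (1:ℝ≥0∞) ≤ ∑' _ : ({k' : K // k' ≠ k} → Fin (M+1)), (1:ℝ≥0∞) :=
          ENNReal.tsum_comp_le_tsum_of_injective hinj (fun _ => 1)
      _ = _ := by
          rw [tsum_fintype]
          simp [Fintype.card_fun, Fintype.card_subtype_compl]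
  calc ∑' _ : ↥T, (1:ℝ≥0∞) ≤ ∑' _ : ↥(⋃ k, S k), (1:ℝ≥0∞) :=
        by exact ENNReal.tsum_mono_subtype (fun _ => (1:ℝ≥0∞)) hsub
    _ ≤ ∑' k : K, ∑' _ : ↥(S k), (1:ℝ≥0∞) := by exact ENNReal.tsum_iUnion_le_tsum (fun _ => (1:ℝ≥0∞)) S
    _ ≤ ∑' _ : K, (((M+1)^(Fintype.card K - 1) : ℕ) : ℝ≥0∞) := ENNReal.tsum_le_tsum hslice
    _ = _ := by rw [tsum_fintype]; simp [mul_comm]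

set_option maxHeartbeats 1000000 in
lemma bzz_sum (d : ℕ) (hd : 2 ≤ d) (θ : ℝ) (hθ : 0 < θ)
    (K : Type) [Fintype K] [DecidableEq K] (hK : Fintype.card K + 1 = d)
    (s : ℝ) (hs : 1 ≤ s) :
    ∑' v : K → ℕ, ENNReal.ofReal (θ * (max s (((Finset.univ.sup v : ℕ) : ℝ) + 1)) ^ (-(d:ℝ)))
      ≤ ENNReal.ofReal (3 * d * θ / s) := by
  classical
  have hs0 : (0:ℝ) < s := lt_of_lt_of_le one_pos hs
  have hd1 : (1:ℝ) ≤ (d:ℝ) := by exact_mod_cast (by omega : 1 ≤ d)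
  have hdθ : (0:ℝ) ≤ ((d:ℝ)-1) * θ := by nlinarith
  have hKne : Nonempty K := by
    rw [← Fintype.card_pos_iff]; omega
  set e := Fintype.card K with he
  have hpow : ∀ x : ℝ, 0 < x → (x^(e - 1 : ℕ)) * x^(-(d:ℝ)) = (x^2)⁻¹ := by
    intro x hx
    rw [← Real.rpow_natCast x (e - 1), ← Real.rpow_add hx]
    have he2 : ((e - 1 : ℕ):ℝ) + (-(d:ℝ)) = -2 := by
      have h1 : e - 1 = d - 2 := by omega
      rw [h1, Nat.cast_sub hd]
      push_cast; ring
    rw [he2, Real.rpow_neg hx.le, show (2:ℝ) = ((2:ℕ):ℝ) by norm_num, Real.rpow_natCast]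
  set g : (K → ℕ) → ℕ := fun v => Finset.univ.sup v with hg
  set c : ℕ → ℝ≥0∞ := fun M => ENNReal.ofReal (θ * (max s ((M:ℝ)+1)) ^ (-(d:ℝ))) with hc
  set N : ℕ → ℕ := fun M => e * (M+1)^(e - 1) with hN
  set m₀ := Nat.floor s with hm₀
  have hm₀1 : 1 ≤ m₀ := Nat.le_floor (by exact_mod_cast hs)
  have hm₀s : (m₀ : ℝ) ≤ s := Nat.floor_le hs0.le
  -- fiberwise decomposition
  have step1 : ∑' v : K → ℕ, c (g v) = ∑' M : ℕ, ∑' v : ↥(g ⁻¹' {M}), c (g v.1) := by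
    rw [← (Equiv.sigmaFiberEquiv g).tsum_eq (fun v => c (g v))]
    rw [ENNReal.tsum_sigma']
    rfl
  have step2 : ∀ M : ℕ, ∑' v : ↥(g ⁻¹' {M}), c (g v.1) ≤ (N M : ℝ≥0∞) * c M := by
    intro M
    have h1 : ∀ v : ↥(g ⁻¹' {M}), c (g v.1) = c M := by
      rintro ⟨v, hv⟩; rw [show g v = M from hv]
    rw [tsum_congr h1]
    calc ∑' _ : ↥(g ⁻¹' {M}), c M = (∑' _ : ↥(g ⁻¹' {M}), (1:ℝ≥0∞)) * c M := by
          rw [← ENNReal.tsum_mul_right]; simp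
      _ ≤ _ := by
          apply mul_le_mul_left
          exact bzz_card K M hKne
  -- pointwise bound by b1 + b2
  have step3 : ∀ M : ℕ, (N M : ℝ≥0∞) * c M ≤
      (if M < m₀ then ENNReal.ofReal (((d:ℝ)-1) * θ * (s^2)⁻¹) else 0)
      + (if m₀ ≤ M then ENNReal.ofReal (((d:ℝ)-1) * θ) * ENNReal.ofReal ((((M:ℝ)+1)^2)⁻¹)
          else 0) := by
    intro M
    have hNc : (N M : ℝ≥0∞) * c M
        = ENNReal.ofReal ((N M : ℝ) * (θ * (max s ((M:ℝ)+1)) ^ (-(d:ℝ)))) := by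
      rw [← ENNReal.ofReal_natCast (N M), ← ENNReal.ofReal_mul (by positivity)]
    have hmaxpos : (0:ℝ) < max s ((M:ℝ)+1) := lt_max_of_lt_left hs0
    have heR : (e:ℝ) = (d:ℝ) - 1 := by
      have : (e:ℝ) + 1 = (d:ℝ) := by exact_mod_cast hK
      linarith
    rcases lt_or_ge M m₀ with h | h
    · rw [if_pos h, if_neg (by omega), add_zero, hNc]
      apply ENNReal.ofReal_le_ofReal
      have hM1 : (M:ℝ) + 1 ≤ s := by
        have : (M:ℝ) + 1 ≤ (m₀:ℝ) := by exact_mod_cast h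
        linarith
      rw [max_eq_left hM1]
      have hNle : (N M : ℝ) ≤ ((d:ℝ)-1) * s^(e-1:ℕ) := by
        rw [hN]
        push_cast
        rw [heR]
        apply mul_le_mul_of_nonneg_left _ (by linarith : (0:ℝ) ≤ (d:ℝ)-1)
        exact pow_le_pow_left₀ (by positivity) hM1 _
      calc (N M : ℝ) * (θ * s ^ (-(d:ℝ))) ≤ (((d:ℝ)-1) * s^(e-1:ℕ)) * (θ * s ^ (-(d:ℝ))) := by
            apply mul_le_mul_of_nonneg_right hNle (by positivity)
        _ = ((d:ℝ)-1) * θ * (s^(e-1:ℕ) * s ^ (-(d:ℝ))) := by ring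
        _ = ((d:ℝ)-1) * θ * (s^2)⁻¹ := by rw [hpow s hs0]
    · rw [if_neg (by omega), if_pos h, zero_add, hNc,
        ← ENNReal.ofReal_mul hdθ]
      apply ENNReal.ofReal_le_ofReal
      have hM0 : (0:ℝ) < (M:ℝ) + 1 := by positivity
      have hrle : (max s ((M:ℝ)+1)) ^ (-(d:ℝ)) ≤ ((M:ℝ)+1) ^ (-(d:ℝ)) :=
        Real.rpow_le_rpow_of_nonpos hM0 (le_max_right _ _) (neg_nonpos.mpr (by positivity))
      calc (N M : ℝ) * (θ * (max s ((M:ℝ)+1)) ^ (-(d:ℝ)))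
          ≤ (N M : ℝ) * (θ * ((M:ℝ)+1) ^ (-(d:ℝ))) := by
            apply mul_le_mul_of_nonneg_left _ (by positivity)
            apply mul_le_mul_of_nonneg_left hrle hθ.le
        _ = ((d:ℝ)-1) * θ * (((M:ℝ)+1)^(e-1:ℕ) * ((M:ℝ)+1) ^ (-(d:ℝ))) := by
            rw [hN]; push_cast; rw [heR]; ring
        _ = ((d:ℝ)-1) * θ * ((((M:ℝ)+1)^2)⁻¹) := by rw [hpow _ hM0]
  -- sum the two pieces
  have sumb1 : ∑' M : ℕ, (if M < m₀ then ENNReal.ofReal (((d:ℝ)-1) * θ * (s^2)⁻¹) else 0)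
      ≤ ENNReal.ofReal (((d:ℝ)-1) * θ / s) := by
    rw [tsum_eq_sum (s := Finset.range m₀) (by intro M hM; rw [if_neg]; simpa using hM)]
    calc ∑ M ∈ Finset.range m₀, (if M < m₀ then ENNReal.ofReal (((d:ℝ)-1) * θ * (s^2)⁻¹) else 0)
        = m₀ * ENNReal.ofReal (((d:ℝ)-1) * θ * (s^2)⁻¹) := by
          rw [Finset.sum_congr rfl (fun M hM => if_pos (Finset.mem_range.1 hM)),
            Finset.sum_const, Finset.card_range, nsmul_eq_mul]
      _ ≤ ENNReal.ofReal s * ENNReal.ofReal (((d:ℝ)-1) * θ * (s^2)⁻¹) := by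
          apply mul_le_mul_left
          rw [← ENNReal.ofReal_natCast m₀]
          exact ENNReal.ofReal_le_ofReal hm₀s
      _ = ENNReal.ofReal (s * (((d:ℝ)-1) * θ * (s^2)⁻¹)) := by
          rw [← ENNReal.ofReal_mul hs0.le]
      _ ≤ _ := by
          apply ENNReal.ofReal_le_ofReal
          rw [div_eq_mul_inv]
          have : s * (((d:ℝ)-1) * θ * (s^2)⁻¹) = ((d:ℝ)-1) * θ * (s * (s^2)⁻¹) := by ring
          rw [this]
          apply mul_le_mul_of_nonneg_left _ hdθ
          rw [pow_two, mul_inv]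
          field_simp
          exact le_rfl
  have sumb2 : ∑' M : ℕ, (if m₀ ≤ M then
        ENNReal.ofReal (((d:ℝ)-1) * θ) * ENNReal.ofReal ((((M:ℝ)+1)^2)⁻¹) else 0)
      ≤ ENNReal.ofReal (((d:ℝ)-1) * θ * (2 / s)) := by
    have hfac : ∀ M : ℕ, (if m₀ ≤ M then
          ENNReal.ofReal (((d:ℝ)-1) * θ) * ENNReal.ofReal ((((M:ℝ)+1)^2)⁻¹) else 0)
        = ENNReal.ofReal (((d:ℝ)-1) * θ)
          * (if m₀ ≤ M then ENNReal.ofReal ((((M:ℝ)+1)^2)⁻¹) else 0) := by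
      intro M; split <;> simp
    rw [tsum_congr hfac, ENNReal.tsum_mul_left]
    calc _ ≤ ENNReal.ofReal (((d:ℝ)-1) * θ) * ENNReal.ofReal (1 / m₀) :=
          mul_le_mul_right (bzz_tele m₀ hm₀1) _
      _ = ENNReal.ofReal (((d:ℝ)-1) * θ * (1 / m₀)) := by
          rw [← ENNReal.ofReal_mul hdθ]
      _ ≤ _ := by
          apply ENNReal.ofReal_le_ofReal
          apply mul_le_mul_of_nonneg_left _ hdθ
          rw [div_le_div_iff₀ (by positivity) hs0]
          have : s < (m₀:ℝ) + 1 := Nat.lt_floor_add_one s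
          have : (1:ℝ) ≤ (m₀:ℝ) := by exact_mod_cast hm₀1
          linarith
  calc ∑' v : K → ℕ, ENNReal.ofReal (θ * (max s (((Finset.univ.sup v : ℕ) : ℝ) + 1)) ^ (-(d:ℝ)))
      = ∑' M : ℕ, ∑' v : ↥(g ⁻¹' {M}), c (g v.1) := step1
    _ ≤ ∑' M : ℕ, (N M : ℝ≥0∞) * c M := ENNReal.tsum_le_tsum step2
    _ ≤ ∑' M : ℕ, ((if M < m₀ then ENNReal.ofReal (((d:ℝ)-1) * θ * (s^2)⁻¹) else 0)
        + (if m₀ ≤ M then ENNReal.ofReal (((d:ℝ)-1) * θ) * ENNReal.ofReal ((((M:ℝ)+1)^2)⁻¹)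
            else 0)) := ENNReal.tsum_le_tsum step3
    _ = _ + _ := ENNReal.tsum_add
    _ ≤ ENNReal.ofReal (((d:ℝ)-1) * θ / s) + ENNReal.ofReal (((d:ℝ)-1) * θ * (2 / s)) :=
          add_le_add sumb1 sumb2
    _ ≤ _ := by
      rw [← ENNReal.ofReal_add (div_nonneg hdθ hs0.le) (mul_nonneg hdθ (by positivity))]
      apply ENNReal.ofReal_le_ofReal
      have h3 : ((d:ℝ)-1) * θ / s + ((d:ℝ)-1) * θ * (2 / s) = (3*(((d:ℝ)-1)*θ))/s := by ring
      rw [h3, div_le_div_iff₀ hs0 hs0]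
      nlinarith [mul_nonneg hθ.le hs0.le]

lemma bzz_indep {Ω : Type} {mΩ : MeasurableSpace Ω} (μ : Measure Ω) [IsProbabilityMeasure μ]
    {ι ι' : Type} (m : ι → MeasurableSpace Ω) (h_le : ∀ y, m y ≤ mΩ)
    (h_indep : iIndep m μ) (T : ι' → Set ι) (A : ι' → Set Ω)
    (s : Finset ι')
    (hdisj : ∀ j ∈ s, ∀ j' ∈ s, j ≠ j' → Disjoint (T j) (T j'))
    (hA : ∀ j ∈ s, MeasurableSet[⨆ y ∈ T j, m y] (A j)) :
    μ (⋂ j ∈ s, A j) = ∏ j ∈ s, μ (A j) := by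
  classical
  revert hdisj hA
  induction s using Finset.cons_induction_on with
  | empty => intro _ _; simp
  | @cons a s' ha ih =>
    intro hdisj hA
    have hdisj' : ∀ j ∈ s', ∀ j' ∈ s', j ≠ j' → Disjoint (T j) (T j') :=
      fun j hj j' hj' => hdisj j (Finset.mem_cons_of_mem hj) j' (Finset.mem_cons_of_mem hj')
    have hA' : ∀ j ∈ s', MeasurableSet[⨆ y ∈ T j, m y] (A j) :=
      fun j hj => hA j (Finset.mem_cons_of_mem hj)
    have hle2 : ∀ j ∈ s', (⨆ y ∈ T j, m y) ≤ ⨆ y ∈ ⋃ j' ∈ (s' : Finset ι'), T j', m y := by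
      intro j hj
      apply iSup₂_le
      intro y hy
      exact le_iSup₂ (f := fun y (_ : y ∈ ⋃ j' ∈ s', T j') => m y) y
        (Set.mem_biUnion hj hy)
    have hind : Indep (⨆ y ∈ T a, m y) (⨆ y ∈ ⋃ j' ∈ (s' : Finset ι'), T j', m y) μ := by
      apply indep_iSup_of_disjoint h_le h_indep
      rw [Set.disjoint_iUnion₂_right]
      intro j hj
      exact hdisj a (Finset.mem_cons_self a s') j (Finset.mem_cons_of_mem hj)
        (fun h => ha (h ▸ hj))
    have hBmeas : MeasurableSet[⨆ y ∈ ⋃ j' ∈ (s' : Finset ι'), T j', m y] (⋂ j ∈ s', A j) := by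
      apply MeasurableSet.biInter (Finset.countable_toSet s')
      intro j hj
      exact hle2 j hj _ (hA' j hj)
    have hAa : MeasurableSet[⨆ y ∈ T a, m y] (A a) := hA a (Finset.mem_cons_self a s')
    rw [Finset.cons_eq_insert, Finset.set_biInter_insert, Finset.prod_insert ha,
      (Indep_iff _ _ _).1 hind _ _ hAa hBmeas, ih hdisj' hA']

set_option maxHeartbeats 1000000 in
/-- Lemma 5 of Bramson–Zeitouni–Zerner: with i.i.d. umbrella lengths as in Lemma 4 and
`λⱼ(z)` the largest umbrella side through `z` in direction `j`, there is `c₇ < ∞` such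
that for all `i`, all `t > n₀` and all `z ∈ U_{i,t}`,
`ℙ[I(z) = i, L(0) > t] ≤ c₇ t^(-2d+1)`, where `I(z) = i` means `λᵢ(z)` is the strict
minimum of the `λⱼ(z)`. -/
theorem stmt6 (d : ℕ) (hd : 2 ≤ d) (n₀ : ℕ) (hn₀ : 1 ≤ n₀) (θ : ℝ) (hθ0 : 0 < θ)
    (hθ : θ ≤ (n₀ : ℝ) ^ d)
    (Ω : Type) [MeasurableSpace Ω] (μ : Measure Ω) [IsProbabilityMeasure μ]
    (L : (Fin d → ℤ) → Ω → ℝ)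
    (hmeas : ∀ y, Measurable (L y))
    (hindep : iIndepFun L μ)
    (hident : ∀ y, Measure.map (L y) μ = Measure.map (L 0) μ)
    (hgt1 : ∀ y, ∀ᵐ ω ∂μ, 1 < L y ω)
    (hatomless : ∀ t : ℝ, μ {ω | L 0 ω = t} = 0)
    (htail : ∀ t : ℝ, (n₀ : ℝ) ≤ t →
      μ {ω | t < L 0 ω} = ENNReal.ofReal (θ * t ^ (-(d : ℝ)))) :
    ∃ c₇ : ℝ, 0 ≤ c₇ ∧ ∀ (i : Fin d) (t : ℝ) (z : Fin d → ℤ), (n₀ : ℝ) < t →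
      (z i = 0 ∧ ∀ j ≠ i, 0 < z j ∧ ((z j : ℤ) : ℝ) ≤ t) →
      μ {ω | (∀ j ≠ i,
            sSup {r : ℝ | ∃ y : Fin d → ℤ, r = L y ω ∧
              ((z - y) i = 0 ∧ ∀ k ≠ i, 0 < (z - y) k ∧ (((z - y) k : ℤ) : ℝ) ≤ L y ω)} <
            sSup {r : ℝ | ∃ y : Fin d → ℤ, r = L y ω ∧
              ((z - y) j = 0 ∧ ∀ k ≠ j, 0 < (z - y) k ∧ (((z - y) k : ℤ) : ℝ) ≤ L y ω)}) ∧
          t < L 0 ω} ≤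
        ENNReal.ofReal (c₇ * t ^ (-2 * (d : ℝ) + 1)) := by
  classical
  refine ⟨3*d*θ + θ*(3*d*θ)^(d-1), by positivity, ?_⟩
  intro i t z ht hz
  obtain ⟨hzi, hzj⟩ := hz
  have hn₀1 : (1:ℝ) ≤ (n₀:ℝ) := by exact_mod_cast hn₀
  have ht1 : (1:ℝ) ≤ t := le_trans hn₀1 ht.le
  have ht0 : (0:ℝ) < t := lt_of_lt_of_le one_pos ht1
  have hd1 : (1:ℝ) ≤ (d:ℝ) := by exact_mod_cast (by omega : 1 ≤ d)
  have hcard : ∀ j : Fin d, Fintype.card {k : Fin d // k ≠ j} + 1 = d := by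
    intro j
    have h1 : Fintype.card {k : Fin d // ¬ (k = j)} = d - 1 := by
      rw [Fintype.card_subtype_compl, Fintype.card_subtype_eq, Fintype.card_fin]
    have h2 : Fintype.card {k : Fin d // k ≠ j} = Fintype.card {k : Fin d // ¬ (k = j)} := rfl
    omega
  have hKne : ∀ j : Fin d, Nonempty {k : Fin d // k ≠ j} := by
    intro j
    rw [← Fintype.card_pos_iff]
    have := hcard j; omega
  -- σ-algebras
  set m : (Fin d → ℤ) → MeasurableSpace Ω :=
    fun y => MeasurableSpace.comap (L y) inferInstance with hm
  have h_le : ∀ y, m y ≤ (inferInstance : MeasurableSpace Ω) := fun y => (hmeas y).comap_le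
  have h_ind : iIndep m μ := hindep.iIndep
  -- index maps
  set yOf : ∀ j : Fin d, ({k : Fin d // k ≠ j} → ℕ) → (Fin d → ℤ) :=
    fun j v k => if h : k = j then z j else z k - 1 - (v ⟨k, h⟩ : ℤ) with hyOf
  -- the events
  set A : Fin d → Set Ω := fun j => if j = i then {ω | t < L 0 ω}
    else ⋃ v : ({k : Fin d // k ≠ j} → ℕ),
      {ω | max t (((Finset.univ.sup v : ℕ) : ℝ) + 1) ≤ L (yOf j v) ω} with hA
  set T : Fin d → Set (Fin d → ℤ) := fun j => if j = i then {0}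
    else {y | y j = z j ∧ ∀ k, k ≠ j → y k < z k} with hT
  set M₀ : ℝ := t ^ (2*(d:ℝ)) with hM₀
  have hM₀t : t ≤ M₀ := by
    rw [hM₀]
    nth_rewrite 1 [show t = t ^ (1:ℝ) from (Real.rpow_one t).symm]
    apply Real.rpow_le_rpow_of_exponent_le ht1
    nlinarith
  have hM₀1 : (1:ℝ) ≤ M₀ := le_trans ht1 hM₀t
  set B : Set Ω := {ω | ¬ BddAbove {r : ℝ | ∃ y : Fin d → ℤ, r = L y ω ∧
      ((z - y) i = 0 ∧ ∀ k ≠ i, 0 < (z - y) k ∧ (((z - y) k : ℤ) : ℝ) ≤ L y ω)}} with hB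
  -- basic tail estimate
  have htail2 : ∀ (y : Fin d → ℤ) (c : ℝ), (n₀:ℝ) ≤ c →
      μ {ω | c ≤ L y ω} ≤ ENNReal.ofReal (θ * c ^ (-(d:ℝ))) := by
    intro y c hc
    have h1 : {ω | c ≤ L y ω} = L y ⁻¹' (Set.Ici c) := rfl
    rw [h1, ← Measure.map_apply (hmeas y) measurableSet_Ici, hident y,
        Measure.map_apply (hmeas 0) measurableSet_Ici]
    have h2 : L 0 ⁻¹' Set.Ici c ⊆ {ω | L 0 ω = c} ∪ {ω | c < L 0 ω} := by
      intro ω hω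
      rcases eq_or_lt_of_le (show c ≤ L 0 ω from hω) with h | h
      · exact Or.inl h.symm
      · exact Or.inr h
    calc μ (L 0 ⁻¹' Set.Ici c) ≤ μ ({ω | L 0 ω = c} ∪ {ω | c < L 0 ω}) := measure_mono h2
      _ ≤ μ {ω | L 0 ω = c} + μ {ω | c < L 0 ω} := measure_union_le _ _
      _ = ENNReal.ofReal (θ * c ^ (-(d:ℝ))) := by
          rw [hatomless c, htail c hc, zero_add]
  -- yOf j v belongs to T j, and witness reconstruction
  have hyOfT : ∀ j, j ≠ i → ∀ v, yOf j v ∈ T j := by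
    intro j hj v
    rw [hT]
    simp only [if_neg hj]
    constructor
    · simp [hyOf]
    · intro k hk
      simp only [hyOf, dif_neg hk]
      have : (0:ℤ) ≤ (v ⟨k, hk⟩ : ℤ) := Int.ofNat_nonneg _
      omega
  -- reconstruction of a witness
  have hrec : ∀ (j : Fin d) (y : Fin d → ℤ) (ω : Ω), (z - y) j = 0 →
      (∀ k ≠ j, 0 < (z - y) k ∧ (((z - y) k : ℤ) : ℝ) ≤ L y ω) →
      ∃ v : ({k : Fin d // k ≠ j} → ℕ), yOf j v = y ∧
        (((Finset.univ.sup v : ℕ) : ℝ) + 1) ≤ L y ω := by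
    intro j y ω hj hk
    refine ⟨fun k => ((z k.1 - y k.1) - 1).toNat, ?_, ?_⟩
    · funext k
      by_cases h : k = j
      · have h0 : z j - y j = 0 := by simpa [Pi.sub_apply] using hj
        have h1 : yOf j (fun k => ((z k.1 - y k.1) - 1).toNat) k = z j := by
          simp [hyOf, h]
        rw [h1, h]
        omega
      · have h1 : 0 < z k - y k := by simpa [Pi.sub_apply] using (hk k h).1
        simp only [hyOf, dif_neg h]
        omega
    · obtain ⟨k₀, -, hk₀⟩ := Finset.exists_mem_eq_sup Finset.univ
        (@Finset.univ_nonempty _ _ (hKne j)) (fun k => ((z k.1 - y k.1) - 1).toNat)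
      rw [hk₀]
      have h1 : 0 < z k₀.1 - y k₀.1 := by
        simpa [Pi.sub_apply] using (hk k₀.1 k₀.2).1
      have h2 : (((z - y) k₀.1 : ℤ) : ℝ) ≤ L y ω := (hk k₀.1 k₀.2).2
      have h4 : ((z k₀.1 - y k₀.1 - 1).toNat : ℤ) = z k₀.1 - y k₀.1 - 1 :=
        Int.toNat_of_nonneg (by omega)
      have h3 : (((z k₀.1 - y k₀.1 - 1).toNat : ℕ) : ℝ) + 1 = ((z k₀.1 - y k₀.1 : ℤ) : ℝ) := by
        rw [← Int.cast_natCast, h4]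
        push_cast
        ring
      rw [h3]
      simpa [Pi.sub_apply] using h2
  -- bound on the direction events
  have hAj : ∀ j, j ≠ i → μ (A j) ≤ ENNReal.ofReal (3*d*θ/t) := by
    intro j hj
    rw [hA]
    simp only [if_neg hj]
    calc μ (⋃ v : ({k : Fin d // k ≠ j} → ℕ),
          {ω | max t (((Finset.univ.sup v : ℕ) : ℝ) + 1) ≤ L (yOf j v) ω})
        ≤ ∑' v : ({k : Fin d // k ≠ j} → ℕ),
          μ {ω | max t (((Finset.univ.sup v : ℕ) : ℝ) + 1) ≤ L (yOf j v) ω} :=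
          measure_iUnion_le _
      _ ≤ ∑' v : ({k : Fin d // k ≠ j} → ℕ),
          ENNReal.ofReal (θ * (max t (((Finset.univ.sup v : ℕ) : ℝ) + 1)) ^ (-(d:ℝ))) := by
          apply ENNReal.tsum_le_tsum
          intro v
          exact htail2 _ _ (le_trans ht.le (le_max_left _ _))
      _ ≤ ENNReal.ofReal (3*d*θ/t) := bzz_sum d hd θ hθ0 _ (hcard j) t ht1
  have hAi : μ (A i) = ENNReal.ofReal (θ * t ^ (-(d:ℝ))) := by
    rw [hA]
    simp only [if_pos rfl]
    exact htail t ht.le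
  -- bound on the bad set
  have hBbd : μ B ≤ ENNReal.ofReal (3*d*θ/M₀) := by
    set M₁ := Nat.ceil M₀ with hM₁
    have hsub : B ⊆ ⋃ v : ({k : Fin d // k ≠ i} → ℕ),
        {ω | (M₀ < ((Finset.univ.sup v : ℕ):ℝ) + 1)
          ∧ ((Finset.univ.sup v : ℕ):ℝ) + 1 ≤ L (yOf i v) ω} := by
      intro ω hω
      rw [hB, Set.mem_setOf_eq, not_bddAbove_iff] at hω
      set F : Finset ({k : Fin d // k ≠ i} → ℕ) :=
        Finset.image (fun f : {k : Fin d // k ≠ i} → Fin (M₁+1) => fun k => (f k : ℕ))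
          Finset.univ with hF
      have hFne : F.Nonempty :=
        ⟨fun _ => 0, Finset.mem_image.2 ⟨fun _ => ⟨0, Nat.succ_pos _⟩, Finset.mem_univ _, rfl⟩⟩
      set b := F.sup' hFne (fun v => L (yOf i v) ω) with hbdef
      obtain ⟨r, hrmem, hrb⟩ := hω (max b t)
      obtain ⟨y, rfl, hy1, hy2⟩ := hrmem
      obtain ⟨v, hveq, hvle⟩ := hrec i y ω hy1 hy2
      refine Set.mem_iUnion.2 ⟨v, ?_, ?_⟩
      · by_contra hM
        push_neg at hM
        have hvF : v ∈ F := by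
          apply Finset.mem_image.2
          refine ⟨fun k => ⟨v k, ?_⟩, Finset.mem_univ _, by funext k; rfl⟩
          have hk1 : v k ≤ Finset.univ.sup v := Finset.le_sup (Finset.mem_univ k)
          have hceil : M₀ ≤ (M₁:ℝ) := Nat.le_ceil M₀
          have hk3 : Finset.univ.sup v ≤ M₁ := by
            have : ((Finset.univ.sup v:ℕ):ℝ) ≤ (M₁:ℝ) := by linarith
            exact_mod_cast this
          omega
        have hle1 : L (yOf i v) ω ≤ b := by
          rw [hbdef]; exact Finset.le_sup' (fun v => L (yOf i v) ω) hvF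
        rw [hveq] at hle1
        have hle2 : L y ω ≤ max b t := le_trans hle1 (le_max_left _ _)
        linarith
      · rw [hveq]; exact hvle
    calc μ B ≤ μ (⋃ v : ({k : Fin d // k ≠ i} → ℕ),
          {ω | (M₀ < ((Finset.univ.sup v : ℕ):ℝ) + 1)
            ∧ ((Finset.univ.sup v : ℕ):ℝ) + 1 ≤ L (yOf i v) ω}) := measure_mono hsub
      _ ≤ ∑' v : ({k : Fin d // k ≠ i} → ℕ),
          μ {ω | (M₀ < ((Finset.univ.sup v : ℕ):ℝ) + 1)
            ∧ ((Finset.univ.sup v : ℕ):ℝ) + 1 ≤ L (yOf i v) ω} := measure_iUnion_le _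
      _ ≤ ∑' v : ({k : Fin d // k ≠ i} → ℕ),
          ENNReal.ofReal (θ * (max M₀ (((Finset.univ.sup v : ℕ):ℝ)+1)) ^ (-(d:ℝ))) := by
          apply ENNReal.tsum_le_tsum
          intro v
          by_cases hc : M₀ < ((Finset.univ.sup v : ℕ):ℝ) + 1
          · calc μ {ω | (M₀ < ((Finset.univ.sup v : ℕ):ℝ) + 1)
                ∧ ((Finset.univ.sup v : ℕ):ℝ) + 1 ≤ L (yOf i v) ω}
                ≤ μ {ω | ((Finset.univ.sup v : ℕ):ℝ) + 1 ≤ L (yOf i v) ω} :=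
                  measure_mono (fun ω h => h.2)
              _ ≤ ENNReal.ofReal (θ * (((Finset.univ.sup v : ℕ):ℝ)+1) ^ (-(d:ℝ))) :=
                  htail2 _ _ (le_trans (le_trans ht.le hM₀t) hc.le)
              _ = ENNReal.ofReal (θ * (max M₀ (((Finset.univ.sup v : ℕ):ℝ)+1)) ^ (-(d:ℝ))) := by
                  rw [max_eq_right hc.le]
          · have hemp : {ω | (M₀ < ((Finset.univ.sup v : ℕ):ℝ) + 1)
                ∧ ((Finset.univ.sup v : ℕ):ℝ) + 1 ≤ L (yOf i v) ω} = ∅ := by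
              ext ω; simp only [Set.mem_setOf_eq, Set.mem_empty_iff_false, iff_false]
              intro hcon; exact hc hcon.1
            rw [hemp, measure_empty]
            exact bot_le
      _ ≤ ENNReal.ofReal (3*d*θ/M₀) := bzz_sum d hd θ hθ0 _ (hcard i) M₀ hM₀1
  -- inclusion
  have hincl : {ω | (∀ j ≠ i,
        sSup {r : ℝ | ∃ y : Fin d → ℤ, r = L y ω ∧
          ((z - y) i = 0 ∧ ∀ k ≠ i, 0 < (z - y) k ∧ (((z - y) k : ℤ) : ℝ) ≤ L y ω)} <
        sSup {r : ℝ | ∃ y : Fin d → ℤ, r = L y ω ∧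
          ((z - y) j = 0 ∧ ∀ k ≠ j, 0 < (z - y) k ∧ (((z - y) k : ℤ) : ℝ) ≤ L y ω)}) ∧
      t < L 0 ω} ⊆ B ∪ ⋂ j ∈ Finset.univ, A j := by
    intro ω hω
    obtain ⟨h1, h2⟩ := hω
    by_cases hb : BddAbove {r : ℝ | ∃ y : Fin d → ℤ, r = L y ω ∧
        ((z - y) i = 0 ∧ ∀ k ≠ i, 0 < (z - y) k ∧ (((z - y) k : ℤ) : ℝ) ≤ L y ω)}
    · right
      rw [Set.mem_iInter₂]
      intro j _
      by_cases hji : j = i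
      · subst hji; rw [hA]; simp only [if_pos rfl]; exact h2
      · have hmemI : L 0 ω ∈ {r : ℝ | ∃ y : Fin d → ℤ, r = L y ω ∧
            ((z - y) i = 0 ∧ ∀ k ≠ i, 0 < (z - y) k ∧ (((z - y) k : ℤ) : ℝ) ≤ L y ω)} := by
          refine ⟨0, rfl, ?_, ?_⟩
          · simpa using hzi
          · intro k hk
            constructor
            · simpa using (hzj k hk).1
            · have h3 := (hzj k hk).2
              have h4 : ((z - 0) k : ℤ) = z k := by simp
              rw [h4]
              exact le_trans h3 h2.le
        have hlam : t < sSup {r : ℝ | ∃ y : Fin d → ℤ, r = L y ω ∧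
            ((z - y) i = 0 ∧ ∀ k ≠ i, 0 < (z - y) k ∧ (((z - y) k : ℤ) : ℝ) ≤ L y ω)} :=
          lt_of_lt_of_le h2 (le_csSup hb hmemI)
        have hj2 : t < sSup {r : ℝ | ∃ y : Fin d → ℤ, r = L y ω ∧
            ((z - y) j = 0 ∧ ∀ k ≠ j, 0 < (z - y) k ∧ (((z - y) k : ℤ) : ℝ) ≤ L y ω)} :=
          lt_trans hlam (h1 j hji)
        have hne : {r : ℝ | ∃ y : Fin d → ℤ, r = L y ω ∧
            ((z - y) j = 0 ∧ ∀ k ≠ j, 0 < (z - y) k ∧ (((z - y) k : ℤ) : ℝ) ≤ L y ω)}.Nonempty := by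
          by_contra hemp
          rw [Set.not_nonempty_iff_eq_empty] at hemp
          rw [hemp, Real.sSup_empty] at hj2
          linarith
        obtain ⟨r, hrmem, hrt⟩ := exists_lt_of_lt_csSup hne hj2
        obtain ⟨y, rfl, hy1, hy2⟩ := hrmem
        obtain ⟨v, hveq, hvle⟩ := hrec j y ω hy1 hy2
        rw [hA]
        simp only [if_neg hji]
        refine Set.mem_iUnion.2 ⟨v, ?_⟩
        show max t (((Finset.univ.sup v : ℕ):ℝ) + 1) ≤ L (yOf j v) ω
        rw [hveq]
        exact max_le hrt.le hvle
    · left; exact hb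
  -- product formula
  have hdisjT : ∀ j ∈ (Finset.univ : Finset (Fin d)), ∀ j' ∈ (Finset.univ : Finset (Fin d)),
      j ≠ j' → Disjoint (T j) (T j') := by
    have key : ∀ j', j' ≠ i → Disjoint ({0} : Set (Fin d → ℤ)) (T j') := by
      intro j' hj'
      rw [Set.disjoint_singleton_left, hT]
      simp only [if_neg hj']
      intro hmem
      have h0 : (0 : Fin d → ℤ) j' = z j' := hmem.1
      have := (hzj j' hj').1
      simp at h0
      omega
    intro j _ j' _ hjj'
    by_cases h1 : j = i
    · subst h1
      have : T j = ({0} : Set (Fin d → ℤ)) := by rw [hT]; simp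
      rw [this]
      exact key j' (Ne.symm hjj')
    · by_cases h2 : j' = i
      · subst h2
        have : T j' = ({0} : Set (Fin d → ℤ)) := by rw [hT]; simp
        rw [this]
        exact (key j h1).symm
      · rw [Set.disjoint_left]
        intro y hyj hyj'
        rw [hT] at hyj hyj'
        simp only [if_neg h1] at hyj
        simp only [if_neg h2] at hyj'
        have ha : y j = z j := hyj.1
        have hb : y j < z j := hyj'.2 j hjj'
        omega
  have hAmeasT : ∀ j ∈ (Finset.univ : Finset (Fin d)),
      MeasurableSet[⨆ y ∈ T j, m y] (A j) := by
    intro j _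
    by_cases h1 : j = i
    · subst h1
      have hTj : (0 : Fin d → ℤ) ∈ T j := by rw [hT]; simp
      have hle : m 0 ≤ ⨆ y ∈ T j, m y :=
        le_iSup₂ (f := fun y (_ : y ∈ T j) => m y) 0 hTj
      apply hle
      have : A j = L 0 ⁻¹' (Set.Ioi t) := by rw [hA]; simp only [if_pos rfl]; rfl
      rw [this]
      exact ⟨Set.Ioi t, measurableSet_Ioi, rfl⟩
    · have hAj2 : A j = ⋃ v : ({k : Fin d // k ≠ j} → ℕ),
          {ω | max t (((Finset.univ.sup v : ℕ) : ℝ) + 1) ≤ L (yOf j v) ω} := by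
        rw [hA]; simp only [if_neg h1]
      rw [hAj2]
      apply MeasurableSet.iUnion
      intro v
      have hle : m (yOf j v) ≤ ⨆ y ∈ T j, m y :=
        le_iSup₂ (f := fun y (_ : y ∈ T j) => m y) (yOf j v) (hyOfT j h1 v)
      apply hle
      exact ⟨Set.Ici _, measurableSet_Ici, rfl⟩
  have hprod : μ (⋂ j ∈ Finset.univ, A j) = ∏ j ∈ (Finset.univ : Finset (Fin d)), μ (A j) :=
    bzz_indep μ m h_le h_ind T A Finset.univ hdisjT hAmeasT
  -- final assembly
  calc μ _ ≤ μ (B ∪ ⋂ j ∈ Finset.univ, A j) := measure_mono hincl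
    _ ≤ μ B + μ (⋂ j ∈ Finset.univ, A j) := measure_union_le _ _
    _ ≤ ENNReal.ofReal (3*d*θ/M₀)
        + ∏ j ∈ (Finset.univ : Finset (Fin d)), μ (A j) := by
        rw [hprod]; exact add_le_add hBbd le_rfl
    _ ≤ ENNReal.ofReal ((3*d*θ + θ*(3*d*θ)^(d-1)) * t ^ (-2 * (d:ℝ) + 1)) := by
        have hM₀0 : (0:ℝ) < M₀ := lt_of_lt_of_le one_pos hM₀1
        have hprodA : ∏ j ∈ (Finset.univ : Finset (Fin d)), μ (A j)
            ≤ ENNReal.ofReal (θ * t ^ (-(d:ℝ)) * ((3*d*θ/t)^(d-1))) := by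
          rw [← Finset.mul_prod_erase Finset.univ _ (Finset.mem_univ i), hAi]
          calc ENNReal.ofReal (θ * t ^ (-(d:ℝ))) * ∏ j ∈ Finset.univ.erase i, μ (A j)
              ≤ ENNReal.ofReal (θ * t ^ (-(d:ℝ)))
                * ∏ _j ∈ Finset.univ.erase i, ENNReal.ofReal (3*d*θ/t) := by
                apply mul_le_mul_right
                exact Finset.prod_le_prod' (fun j hj => hAj j (Finset.ne_of_mem_erase hj))
            _ = ENNReal.ofReal (θ * t ^ (-(d:ℝ))) * ENNReal.ofReal ((3*d*θ/t)^(d-1)) := by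
                rw [Finset.prod_const, Finset.card_erase_of_mem (Finset.mem_univ i),
                  Finset.card_univ, Fintype.card_fin, ← ENNReal.ofReal_pow (by positivity)]
            _ = ENNReal.ofReal (θ * t ^ (-(d:ℝ)) * ((3*d*θ/t)^(d-1))) := by
                rw [← ENNReal.ofReal_mul (by positivity)]
        have e1 : t ^ ((d-1:ℕ)) = t ^ ((d:ℝ) - 1) := by
          rw [← Real.rpow_natCast t (d-1), Nat.cast_sub (by omega), Nat.cast_one]
        have e3 : (t ^ ((d:ℝ)-1))⁻¹ = t ^ (-((d:ℝ)-1)) := (Real.rpow_neg ht0.le _).symm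
        have e4 : t ^ (-(d:ℝ)) * t ^ (-((d:ℝ)-1)) = t ^ (-2*(d:ℝ)+1) := by
          rw [← Real.rpow_add ht0, show (-(d:ℝ) + -((d:ℝ)-1)) = -2*(d:ℝ)+1 by ring]
        have e2 : θ * t ^ (-(d:ℝ)) * ((3*d*θ/t)^(d-1))
            = θ*(3*d*θ)^(d-1) * t ^ (-2*(d:ℝ)+1) := by
          rw [div_pow, e1, div_eq_mul_inv, e3, ← e4]
          ring
        have part1 : 3*(d:ℝ)*θ/M₀ ≤ 3*(d:ℝ)*θ * t ^ (-2*(d:ℝ)+1) := by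
          rw [hM₀, div_eq_mul_inv, ← Real.rpow_neg ht0.le]
          apply mul_le_mul_of_nonneg_left _ (by positivity)
          apply Real.rpow_le_rpow_of_exponent_le ht1
          linarith
        calc ENNReal.ofReal (3*d*θ/M₀) + ∏ j ∈ (Finset.univ : Finset (Fin d)), μ (A j)
            ≤ ENNReal.ofReal (3*d*θ/M₀)
              + ENNReal.ofReal (θ * t ^ (-(d:ℝ)) * ((3*d*θ/t)^(d-1))) :=
              add_le_add le_rfl hprodA
          _ = ENNReal.ofReal (3*d*θ/M₀ + θ * t ^ (-(d:ℝ)) * ((3*d*θ/t)^(d-1))) := by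
              rw [← ENNReal.ofReal_add (div_nonneg (by positivity) hM₀0.le) (by positivity)]
          _ ≤ _ := by
              apply ENNReal.ofReal_le_ofReal
              rw [e2, add_mul]
              have h5 : θ*(3*d*θ)^(d-1) * t ^ (-2*(d:ℝ)+1)
                  = θ*(3*(d:ℝ)*θ)^(d-1) * t ^ (-2*(d:ℝ)+1) := by norm_num
              linarith [part1]
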